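/- arXiv:0801.2524 — 3 statements merged into one kernel-verified Lean document; each statement's English description precedes it below -/
import Mathlib

section
/- The minimal permutations (with respect to the pattern containment order) having exactly 2 descents are precisely 321, 3142, and 2143. Equivalently: a permutation σ has at least 2 descents if and only if σ contains at least one of the patterns 321, 3142, 2143. -/
def descents (l : List ℕ) : ℕ :=
  (l.zip l.tail).countP (fun p => decide (p.2 < p.1))
def IsPermList (n : ℕ) (l : List ℕ) : Prop :=
  l.Perm (List.range' 1 n)
def OrderIsoList (a b : List ℕ) : Prop :=
  a.length = b.length ∧
    ∀ i j, i < j → j < a.length → (a.getD i 0 < a.getD j 0 ↔ b.getD i 0 < b.getD j 0)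

def IsPattern (π σ : List ℕ) : Prop :=
  ∃ s, s.Sublist σ ∧ OrderIsoList π s

lemma descents_nil : descents [] = 0 := rfl
lemma descents_single (x : ℕ) : descents [x] = 0 := rfl
lemma descents_cons_cons (x y : ℕ) (t : List ℕ) :
    descents (x::y::t) = descents (y::t) + (if y < x then 1 else 0) := by
  simp [descents, List.countP_cons]

lemma descents_cons_le (a : ℕ) (l : List ℕ) : descents l ≤ descents (a::l) := by
  cases l with
  | nil => simp [descents]
  | cons y t => rw [descents_cons_cons]; omega

lemma descents_cons_cons_le (a b : ℕ) (l : List ℕ) :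
    descents (a::l) ≤ descents (a::b::l) := by
  cases l with
  | nil => simp [descents_single, descents_cons_cons]
  | cons y t =>
      simp only [descents_cons_cons]
      split_ifs <;> omega

lemma descents_sublist_aux {s l : List ℕ} (h : s.Sublist l) :
    descents s ≤ descents l ∧ ∀ a, descents (a::s) ≤ descents (a::l) := by
  induction h with
  | slnil => exact ⟨le_refl _, fun a => le_refl _⟩
  | @cons _ l₂ b h ih =>
      refine ⟨le_trans ih.1 (descents_cons_le b _), fun a => ?_⟩
      exact le_trans (ih.2 a) (descents_cons_cons_le a b _)
  | @cons_cons _ _ b h ih =>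
      refine ⟨ih.2 b, fun a => ?_⟩
      rw [descents_cons_cons, descents_cons_cons]
      have := ih.2 b
      omega

lemma descents_sublist {s l : List ℕ} (h : s.Sublist l) : descents s ≤ descents l :=
  (descents_sublist_aux h).1

lemma one_desc {l : List ℕ} (h : 1 ≤ descents l) : ∃ a b, [a,b].Sublist l ∧ b < a := by
  induction l with
  | nil => simp [descents_nil] at h
  | cons x t ih =>
      cases t with
      | nil => simp [descents_single] at h
      | cons y t' =>
          rw [descents_cons_cons] at h
          by_cases hyx : y < x
          · exact ⟨x, y, ((List.nil_sublist t').cons₂ y).cons₂ x, hyx⟩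
          · simp [hyx] at h
            obtain ⟨a, b, hs, hb⟩ := ih h
            exact ⟨a, b, hs.cons x, hb⟩

lemma two_desc {l : List ℕ} (h : 2 ≤ descents l) :
    (∃ a b c, [a,b,c].Sublist l ∧ b < a ∧ c < b) ∨
    (∃ a b c d, [a,b,c,d].Sublist l ∧ b < a ∧ d < c) := by
  induction l with
  | nil => simp [descents_nil] at h
  | cons x t ih =>
      cases t with
      | nil => simp [descents_single] at h
      | cons y t' =>
          rw [descents_cons_cons] at h
          by_cases hyx : y < x
          · have h1 : 1 ≤ descents (y::t') := by simp [hyx] at h; omega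
            obtain ⟨a, b, hs, hb⟩ := one_desc h1
            cases hs with
            | cons _ hs' =>
                right
                exact ⟨x, y, a, b, (hs'.cons₂ y).cons₂ x, hyx, hb⟩
            | cons_cons _ hs' =>
                left
                exact ⟨x, y, b, (hs'.cons₂ y).cons₂ x, hyx, hb⟩
          · simp [hyx] at h
            rcases ih h with ⟨a,b,c,hs,h1,h2⟩ | ⟨a,b,c,d,hs,h1,h2⟩
            · exact Or.inl ⟨a,b,c, hs.cons x, h1, h2⟩
            · exact Or.inr ⟨a,b,c,d, hs.cons x, h1, h2⟩

lemma oil3 {a b c : ℕ} (h2 : b < a) (h1 : c < b) : OrderIsoList [3,2,1] [a,b,c] := by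
  refine ⟨rfl, fun i j hij hj => ?_⟩
  simp only [List.length_cons, List.length_nil] at hj
  interval_cases j <;> interval_cases i <;> simp [List.getD] <;> omega

lemma oil3142 {a b c d : ℕ} (h1 : b < d) (h2 : d < a) (h3 : a < c) :
    OrderIsoList [3,1,4,2] [a,b,c,d] := by
  refine ⟨rfl, fun i j hij hj => ?_⟩
  simp only [List.length_cons, List.length_nil] at hj
  interval_cases j <;> interval_cases i <;> simp [List.getD] <;> omega

lemma oil2143 {a b c d : ℕ} (h1 : b < a) (h2 : a < d) (h3 : d < c) :
    OrderIsoList [2,1,4,3] [a,b,c,d] := by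
  refine ⟨rfl, fun i j hij hj => ?_⟩
  simp only [List.length_cons, List.length_nil] at hj
  interval_cases j <;> interval_cases i <;> simp [List.getD] <;> omega

lemma two_le_descents3 {p q r : ℕ} (h1 : q < p) (h2 : r < q) : 2 ≤ descents [p,q,r] := by
  simp [descents_cons_cons, descents_single, h1, h2]

lemma two_le_descents4 {p q r w : ℕ} (h1 : q < p) (h2 : w < r) : 2 ≤ descents [p,q,r,w] := by
  simp only [descents_cons_cons, descents_single]
  split_ifs <;> omega
theorem stmt4 (n : ℕ) (l : List ℕ) (h : IsPermList n l) :
    2 ≤ descents l ↔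
      (IsPattern [3, 2, 1] l ∨ IsPattern [3, 1, 4, 2] l ∨ IsPattern [2, 1, 4, 3] l) := by
  have hnd : l.Nodup := h.nodup_iff.mpr (List.nodup_range' (s := 1) (n := n))
  constructor
  · intro hd
    rcases two_desc hd with ⟨a,b,c,hs,h1,h2⟩ | ⟨a,b,c,d,hs,h1,h2⟩
    · exact Or.inl ⟨[a,b,c], hs, oil3 h1 h2⟩
    · have hnd4 : ([a,b,c,d] : List ℕ).Nodup := hs.nodup hnd
      simp [List.nodup_cons] at hnd4
      obtain ⟨⟨hab, hac, had⟩, ⟨hbc, hbd⟩, hcd⟩ := hnd4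
      by_cases hdb : d < b
      · -- 321 via (a,b,d)
        have hsub : ([a,b,d] : List ℕ).Sublist [a,b,c,d] :=
          (((List.Sublist.refl [d]).cons c).cons₂ b).cons₂ a
        exact Or.inl ⟨[a,b,d], hsub.trans hs, oil3 h1 hdb⟩
      · have hbd' : b < d := by omega
        by_cases hca : c < a
        · -- 321 via (a,c,d)
          have hsub : ([a,c,d] : List ℕ).Sublist [a,b,c,d] :=
            ((((List.Sublist.refl [d]).cons₂ c)).cons b).cons₂ a
          exact Or.inl ⟨[a,c,d], hsub.trans hs, oil3 hca h2⟩
        · have hac' : a < c := by omega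
          by_cases hda : d < a
          · exact Or.inr (Or.inl ⟨[a,b,c,d], hs, oil3142 hbd' hda hac'⟩)
          · have had' : a < d := by omega
            exact Or.inr (Or.inr ⟨[a,b,c,d], hs, oil2143 h1 had' h2⟩)
  · rintro (⟨s, hs, hlen, hiso⟩ | ⟨s, hs, hlen, hiso⟩ | ⟨s, hs, hlen, hiso⟩)
    · -- 321
      have hlen3 : s.length = 3 := by simpa using hlen.symm
      obtain ⟨p, q, r, rfl⟩ := List.length_eq_three.mp hlen3
      have hnds : ([p,q,r] : List ℕ).Nodup := hs.nodup hnd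
      simp [List.nodup_cons] at hnds
      have e01 := hiso 0 1 (by norm_num) (by norm_num)
      have e12 := hiso 1 2 (by norm_num) (by norm_num)
      simp [List.getD] at e01 e12
      have h1 : q < p := by rcases hnds with ⟨⟨h', _⟩, h''⟩; omega
      have h2 : r < q := by rcases hnds with ⟨⟨_, _⟩, h''⟩; omega
      exact le_trans (two_le_descents3 h1 h2) (descents_sublist hs)
    · have hlen4 : s.length = 4 := by simpa using hlen.symm
      obtain ⟨p, s', hps⟩ : ∃ p s', s = p :: s' := by
        cases s with
        | nil => simp at hlen4
        | cons p s' => exact ⟨p, s', rfl⟩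
      subst hps
      obtain ⟨q, r, w, rfl⟩ := List.length_eq_three.mp (by simpa using hlen4)
      have hnds : ([p,q,r,w] : List ℕ).Nodup := hs.nodup hnd
      simp [List.nodup_cons] at hnds
      have e01 := hiso 0 1 (by norm_num) (by norm_num)
      have e23 := hiso 2 3 (by norm_num) (by norm_num)
      simp [List.getD] at e01 e23
      have h1 : q < p := by
        have : p ≠ q := hnds.1.1
        omega
      have h2 : w < r := by
        have : r ≠ w := hnds.2.2
        omega
      exact le_trans (two_le_descents4 h1 h2) (descents_sublist hs)
    · have hlen4 : s.length = 4 := by simpa using hlen.symm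
      obtain ⟨p, s', hps⟩ : ∃ p s', s = p :: s' := by
        cases s with
        | nil => simp at hlen4
        | cons p s' => exact ⟨p, s', rfl⟩
      subst hps
      obtain ⟨q, r, w, rfl⟩ := List.length_eq_three.mp (by simpa using hlen4)
      have hnds : ([p,q,r,w] : List ℕ).Nodup := hs.nodup hnd
      simp [List.nodup_cons] at hnds
      have e01 := hiso 0 1 (by norm_num) (by norm_num)
      have e23 := hiso 2 3 (by norm_num) (by norm_num)
      simp [List.getD] at e01 e23
      have h1 : q < p := by
        have : p ≠ q := hnds.1.1
        omega
      have h2 : w < r := by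
        have : r ≠ w := hnds.2.2
        omega
      exact le_trans (two_le_descents4 h1 h2) (descents_sublist hs)
end

section
/- If a permutation σ ∈ Sₙ can be obtained from the identity 1 2 ... n by p duplication-loss steps of width at most K, then the vp-domain of σ contains at most Kp elements. -/
inductive Interleave : List ℕ → List ℕ → List ℕ → Prop
  | nil : Interleave [] [] []
  | left {x : ℕ} {l a b : List ℕ} : Interleave l a b → Interleave (x :: l) (x :: a) b
  | right {x : ℕ} {l a b : List ℕ} : Interleave l a b → Interleave (x :: l) a (x :: b)

def DLStep (K : ℕ) (τ σ : List ℕ) : Prop :=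
  ∃ pre w post w1 w2 : List ℕ, τ = pre ++ w ++ post ∧ w.length ≤ K ∧
    Interleave w w1 w2 ∧ σ = pre ++ (w1 ++ w2) ++ post

def DLIter (K : ℕ) : ℕ → List ℕ → List ℕ → Prop
  | 0, τ, σ => τ = σ
  | p + 1, τ, σ => ∃ μ, DLStep K τ μ ∧ DLIter K p μ σ

def ObtainableIn (K p : ℕ) (τ σ : List ℕ) : Prop :=
  ∃ q ≤ p, DLIter K q τ σ
def vpDomain (l : List ℕ) : Set ℕ :=
  {v | v ∈ l ∧ ∃ i ∈ l, l.idxOf i ≠ i - 1 ∧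
    min (l.idxOf i) (i - 1) ≤ l.idxOf v ∧ l.idxOf v ≤ max (l.idxOf i) (i - 1)}

/-- The prefix of length `c` of `l` is a permutation of `{1,…,c}`. -/
def GoodCut (l : List ℕ) (c : ℕ) : Prop := (l.take c).Perm (List.range' 1 c)

lemma Interleave.perm {l a b : List ℕ} (h : Interleave l a b) : l.Perm (a ++ b) := by
  induction h with
  | nil => exact List.Perm.refl _
  | left _ ih => exact ih.cons _
  | right _ ih => exact (ih.cons _).trans List.perm_middle.symm

lemma mem_take_iff_indexOf_lt (l : List ℕ) (x : ℕ) (hx : x ∈ l) (c : ℕ) :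
    x ∈ l.take c ↔ l.idxOf x < c := by
  induction l generalizing c with
  | nil => simp at hx
  | cons y t ih =>
    cases c with
    | zero => simp
    | succ c =>
      by_cases hxy : x = y
      · subst hxy
        simp [List.idxOf_cons]
      · have hxt : x ∈ t := by
          rcases List.mem_cons.1 hx with h | h
          · exact absurd h hxy
          · exact h
        have hne : (y == x) = false := by
          simp [Ne.symm hxy]
        simp only [List.take_succ_cons, List.mem_cons, List.idxOf_cons, hne, cond_false]
        constructor
        · rintro (rfl | hm)
          · exact absurd rfl hxy
          · exact Nat.succ_lt_succ ((ih hxt c).1 hm)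
        · intro hlt
          exact Or.inr ((ih hxt c).2 (Nat.lt_of_succ_lt_succ hlt))

lemma GoodCut.mem_le {l : List ℕ} {c : ℕ} (h : GoodCut l c) {x : ℕ} (hx : x ∈ l.take c) :
    1 ≤ x ∧ x ≤ c := by
  have := h.mem_iff.1 hx
  rw [List.mem_range'_1] at this
  omega

lemma GoodCut.mem_of_le {l : List ℕ} {c : ℕ} (h : GoodCut l c) {x : ℕ}
    (h1 : 1 ≤ x) (h2 : x ≤ c) : x ∈ l.take c := by
  exact h.mem_iff.2 (List.mem_range'_1.2 ⟨h1, by omega⟩)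

/-- Key combinatorial lemma: if `v` is in the vp-domain, then one of the two cuts
adjacent to its position is bad. -/
lemma bad_cut_of_mem_vpDomain {l : List ℕ} (hpos : ∀ x ∈ l, 1 ≤ x) {v : ℕ}
    (hv : v ∈ vpDomain l) :
    ¬ GoodCut l (l.idxOf v) ∨ ¬ GoodCut l (l.idxOf v + 1) := by
  obtain ⟨hvl, i, hil, hne, hmin, hmax⟩ := hv
  set a := l.idxOf i with ha
  set b := i - 1 with hb
  set j := l.idxOf v with hj
  rcases Nat.lt_or_ge a b with hab | hab
  · -- a < b : i appears early
    rw [min_eq_left hab.le] at hmin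
    rw [max_eq_right hab.le] at hmax
    rcases Nat.lt_or_ge j b with hjb | hjb
    · right
      intro hg
      have hmem : i ∈ l.take (j + 1) := by
        rw [mem_take_iff_indexOf_lt l i hil]; omega
      have := hg.mem_le hmem
      omega
    · have hjb' : j = b := le_antisymm hmax hjb
      left
      intro hg
      have hmem : i ∈ l.take j := by
        rw [mem_take_iff_indexOf_lt l i hil]; omega
      have := hg.mem_le hmem
      omega
  · -- b ≤ a, and a ≠ b so b < a : i appears late
    have hba : b < a := by omega
    rw [min_eq_right hba.le] at hmin
    rw [max_eq_left hba.le] at hmax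
    have hi1 : 1 ≤ i := hpos i hil
    rcases Nat.lt_or_ge j a with hja | hja
    · right
      intro hg
      have hmem : i ∈ l.take (j + 1) := hg.mem_of_le hi1 (by omega)
      rw [mem_take_iff_indexOf_lt l i hil] at hmem
      omega
    · have hja' : j = a := le_antisymm hmax hja
      left
      intro hg
      have hmem : i ∈ l.take j := hg.mem_of_le hi1 (by omega)
      rw [mem_take_iff_indexOf_lt l i hil] at hmem
      omega

lemma goodCut_congr {pre w w' post : List ℕ} (hperm : w.Perm w') {c : ℕ}
    (hc : c ≤ pre.length ∨ pre.length + w.length ≤ c) :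
    GoodCut (pre ++ w ++ post) c ↔ GoodCut (pre ++ w' ++ post) c := by
  have hlen : w.length = w'.length := hperm.length_eq
  have key : ((pre ++ w ++ post).take c).Perm ((pre ++ w' ++ post).take c) := by
    rcases hc with hc | hc
    · have e1 : c - (pre ++ w).length = 0 := by
        rw [List.length_append]; omega
      have e1' : c - (pre ++ w').length = 0 := by
        rw [List.length_append]; omega
      have e2 : c - pre.length = 0 := by omega
      have h1 : (pre ++ w ++ post).take c = (pre.take c ++ w.take 0) ++ post.take 0 := by
        rw [List.take_append, List.take_append, e1, e2]
      have h2 : (pre ++ w' ++ post).take c = (pre.take c ++ w'.take 0) ++ post.take 0 := by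
        rw [List.take_append, List.take_append, e1', e2]
      rw [h1, h2]
      simp
    · have h1 : (pre ++ w ++ post).take c
          = (pre ++ w) ++ post.take (c - (pre.length + w.length)) := by
        rw [List.take_append, List.take_append,
          List.take_of_length_le (show pre.length ≤ c by omega),
          List.take_of_length_le (show w.length ≤ c - pre.length by omega),
          List.length_append]
      have h2 : (pre ++ w' ++ post).take c
          = (pre ++ w') ++ post.take (c - (pre.length + w.length)) := by
        rw [List.take_append, List.take_append,
          List.take_of_length_le (show pre.length ≤ c by omega),
          List.take_of_length_le (show w'.length ≤ c - pre.length by omega),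
          List.length_append, ← hlen]
      rw [h1, h2]
      exact ((hperm.append_left pre).append_right _)
  constructor
  · intro hg; exact key.symm.trans hg
  · intro hg; exact key.trans hg

/-- Main induction: bad cuts of `σ` are either bad cuts of `τ` or lie in a set of
size at most `K * q`. -/
lemma dliter_bad_cuts (K : ℕ) : ∀ q τ σ, DLIter K q τ σ →
    ∃ F : Finset ℕ, F.card ≤ K * q ∧
      ∀ j, (¬ GoodCut σ j ∨ ¬ GoodCut σ (j + 1)) →
        (¬ GoodCut τ j ∨ ¬ GoodCut τ (j + 1)) ∨ j ∈ F := by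
  intro q
  induction q with
  | zero =>
    intro τ σ hiter
    cases hiter
    exact ⟨∅, by simp, fun j hj => Or.inl hj⟩
  | succ q ih =>
    rintro τ σ ⟨μ, ⟨pre, w, post, w1, w2, hτ, hK, hint, hμ⟩, hiter⟩
    obtain ⟨F', hF'card, hF'⟩ := ih μ σ hiter
    set a := pre.length
    set k := w.length
    refine ⟨F' ∪ Finset.Ico a (a + k), ?_, ?_⟩
    · calc (F' ∪ Finset.Ico a (a + k)).card ≤ F'.card + (Finset.Ico a (a + k)).card :=
            Finset.card_union_le _ _
        _ ≤ K * q + k := by rw [Nat.card_Ico]; omega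
        _ ≤ K * (q + 1) := by rw [Nat.mul_succ]; omega
    · intro j hj
      have hcongr : ∀ c, c ≤ a ∨ a + k ≤ c → (GoodCut τ c ↔ GoodCut μ c) := by
        intro c hc
        rw [hτ, hμ]
        exact goodCut_congr hint.perm hc
      rcases hF' j hj with hμbad | hjF'
      · rcases hμbad with hb | hb
        · by_cases hgτ : GoodCut τ j
          · right
            refine Finset.mem_union_right _ (Finset.mem_Ico.2 ?_)
            by_contra hcon
            push_neg at hcon
            exact hb ((hcongr j (by omega)).1 hgτ)
          · exact Or.inl (Or.inl hgτ)
        · by_cases hgτ : GoodCut τ (j + 1)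
          · right
            refine Finset.mem_union_right _ (Finset.mem_Ico.2 ?_)
            by_contra hcon
            push_neg at hcon
            exact hb ((hcongr (j + 1) (by omega)).1 hgτ)
          · exact Or.inl (Or.inr hgτ)
      · exact Or.inr (Finset.mem_union_left _ hjF')

lemma goodCut_range' (n c : ℕ) (hc : c ≤ n) : GoodCut (List.range' 1 n) c := by
  have : List.range' 1 n = List.range' 1 c ++ List.range' (1 + c) (n - c) := by
    rw [show (1:ℕ) + c = 1 + 1 * c by ring, List.range'_append]
    congr 1
    omega
  unfold GoodCut
  rw [this, List.take_append, List.length_range',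
    Nat.sub_self, List.take_zero, List.append_nil, List.take_of_length_le (by simp)]

theorem stmt14 (n K p : ℕ) (σ : List ℕ) (h : IsPermList n σ)
    (hobt : ObtainableIn K p (List.range' 1 n) σ) :
    (vpDomain σ).ncard ≤ K * p := by
  obtain ⟨q, hqp, hiter⟩ := hobt
  obtain ⟨F, hFcard, hF⟩ := dliter_bad_cuts K q _ _ hiter
  have hlen : σ.length = n := by
    have := h.length_eq
    simpa using this
  -- every element of the vp-domain has its index in F
  have hidx : ∀ v ∈ vpDomain σ, σ.idxOf v ∈ F := by
    intro v hv
    have hvσ : v ∈ σ := hv.1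
    have hjn : σ.idxOf v < n := by
      rw [← hlen]
      exact List.idxOf_lt_length_iff.2 hvσ
    have hpos : ∀ x ∈ σ, 1 ≤ x := by
      intro x hx
      have := h.subset hx
      rw [List.mem_range'_1] at this
      omega
    rcases hF (σ.idxOf v) (bad_cut_of_mem_vpDomain hpos hv) with hbad | hmem
    · rcases hbad with hb | hb
      · exact absurd (goodCut_range' n _ (by omega)) hb
      · exact absurd (goodCut_range' n _ (by omega)) hb
    · exact hmem
  set S : Finset ℕ := σ.toFinset.filter (fun v => σ.idxOf v ∈ F) with hS
  have hsub : vpDomain σ ⊆ ↑S := by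
    intro v hv
    simp only [hS, Finset.coe_filter, Set.mem_setOf_eq, List.mem_toFinset]
    exact ⟨hv.1, hidx v hv⟩
  have h1 : (vpDomain σ).ncard ≤ S.card := by
    have := Set.ncard_le_ncard hsub S.finite_toSet
    rwa [Set.ncard_coe_finset] at this
  have h2 : S.card ≤ F.card := by
    apply Finset.card_le_card_of_injOn (fun v => σ.idxOf v)
    · intro v hvS
      exact (Finset.mem_filter.1 hvS).2
    · intro v1 hv1 v2 hv2 heq
      simp only [hS, Finset.coe_filter, Set.mem_setOf_eq, List.mem_toFinset] at hv1 hv2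
      have e1 : σ.get ⟨σ.idxOf v1, List.idxOf_lt_length_iff.2 hv1.1⟩ = v1 :=
        List.idxOf_get _
      have e2 : σ.get ⟨σ.idxOf v2, List.idxOf_lt_length_iff.2 hv2.1⟩ = v2 :=
        List.idxOf_get _
      rw [← e1, ← e2]
      congr 1
      exact Fin.ext heq
  calc (vpDomain σ).ncard ≤ S.card := h1
    _ ≤ F.card := h2
    _ ≤ K * q := hFcard
    _ ≤ K * p := Nat.mul_le_mul_left K hqp
end

section
/- A single duplication-loss step of width K applied to a permutation creates at most ⌊K²/4⌋ new inversions: if i of the K window elements are kept in the first copy, at most i(K−i) new inversions are created. -/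
def invCount : List ℕ → ℕ
  | [] => 0
  | x :: xs => xs.countP (fun y => decide (y < x)) + invCount xs
def cross (l r : List ℕ) : ℕ :=
  (l.map (fun x => r.countP (fun y => decide (y < x)))).sum

lemma invCount_append (l r : List ℕ) :
    invCount (l ++ r) = invCount l + cross l r + invCount r := by
  induction l with
  | nil => simp [invCount, cross]
  | cons x xs ih =>
    simp only [List.cons_append, invCount, List.append_eq, List.countP_append, cross,
      List.map_cons, List.sum_cons] at *
    omega

lemma cross_perm_left {l l' : List ℕ} (h : l.Perm l') (r : List ℕ) :
    cross l r = cross l' r :=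
  (h.map _).sum_eq

lemma cross_perm_right (l : List ℕ) {r r' : List ℕ} (h : r.Perm r') :
    cross l r = cross l r' := by
  unfold cross
  congr 1
  exact List.map_congr_left fun x _ => h.countP_eq _

lemma cross_le (l r : List ℕ) : cross l r ≤ l.length * r.length := by
  induction l with
  | nil => simp [cross]
  | cons x xs ih =>
    have := List.countP_le_length (p := fun y => decide (y < x)) (l := r)
    simp only [cross, List.map_cons, List.sum_cons, List.length_cons] at *
    nlinarith

lemma interleave_perm {w a b : List ℕ} (h : Interleave w a b) : w.Perm (a ++ b) := by
  induction h with
  | nil => simp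
  | left _ ih => exact ih.cons _
  | right _ ih => exact (ih.cons _).trans List.perm_middle.symm

lemma interleave_sublist {w a b : List ℕ} (h : Interleave w a b) :
    a.Sublist w ∧ b.Sublist w := by
  induction h with
  | nil => simp
  | left _ ih => exact ⟨ih.1.cons₂ _, ih.2.cons _⟩
  | right _ ih => exact ⟨ih.1.cons _, ih.2.cons₂ _⟩

lemma invCount_interleave {w a b : List ℕ} (h : Interleave w a b) :
    invCount a + invCount b ≤ invCount w := by
  induction h with
  | nil => simp [invCount]
  | @left x l a b h ih =>
    have hs := (interleave_sublist h).1
    have := hs.countP_le (p := fun y => decide (y < x))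
    simp only [invCount]
    omega
  | @right x l a b h ih =>
    have hs := (interleave_sublist h).2
    have := hs.countP_le (p := fun y => decide (y < x))
    simp only [invCount]
    omega

lemma cross_append_right (l a b : List ℕ) :
    cross l (a ++ b) = cross l a + cross l b := by
  induction l with
  | nil => simp [cross]
  | cons x xs ih =>
    simp only [cross, List.map_cons, List.sum_cons, List.countP_append] at *
    omega

lemma cross_append_left (a b r : List ℕ) :
    cross (a ++ b) r = cross a r + cross b r := by
  simp [cross]

theorem stmt17 (pre w post w1 w2 : List ℕ) (hI : Interleave w w1 w2) :
    invCount (pre ++ (w1 ++ w2) ++ post) ≤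
        invCount (pre ++ w ++ post) + w1.length * w2.length ∧
      w1.length * w2.length ≤ w.length ^ 2 / 4 := by
  have hperm := interleave_perm hI
  constructor
  · simp only [invCount_append, cross_append_right, cross_append_left]
    have h1 : cross pre w = cross pre w1 + cross pre w2 := by
      rw [cross_perm_right pre hperm, cross_append_right]
    have h2 : cross w post = cross w1 post + cross w2 post := by
      rw [cross_perm_left hperm post, cross_append_left]
    have h3 := invCount_interleave hI
    have h4 := cross_le w1 w2
    omega
  · have hl : w.length = w1.length + w2.length := by
      rw [hperm.length_eq, List.length_append]
    rw [hl]
    rw [Nat.le_div_iff_mul_le (by norm_num)]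
    have : (w1.length * w2.length * 4 : ℤ) ≤ ((w1.length + w2.length : ℕ) : ℤ) ^ 2 := by
      push_cast
      nlinarith [sq_nonneg ((w1.length : ℤ) - w2.length)]
    exact_mod_cast this
end
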